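/- Let τ > 1/e, let σ, c : [0, ϱ(τ)] → ℝ be measurable with 0 ≤ σ(t) ≤ τ and |c(t)| ≤ 1 for all t, and let y : [-τ, ϱ(τ)] → ℝ be continuous with 0 ≤ y(t) ≤ 1 for all t ∈ [-τ, ϱ(τ)], max y > 0, y(ϱ(τ)) = 0, and y(t) = y(0) - ∫_0^t c(s)·y(s - σ(s)) ds for all t ∈ [0, ϱ(τ)]. Then the function a(t) := x_τ(t) - y(t) is nonnegative and nonincreasing on [0, ϱ(τ)]; in particular y(t) ≤ x_τ(t) for all t ∈ [0, ϱ(τ)]. -/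

import Mathlib

open Real MeasureTheory Filter Set

noncomputable section

/-- `x` is the solution of `x'(t) = -x(t-τ)` with `x ≡ 1` on `(-∞,0]`:
`x(t) = 1 - ∫_0^t x(s-τ) ds` for `t ≥ 0`. -/
def IsXSol (τ : ℝ) (x : ℝ → ℝ) : Prop :=
  Continuous x ∧ (∀ t ≤ (0:ℝ), x t = 1) ∧
    ∀ t ≥ (0:ℝ), x t = 1 - ∫ s in (0:ℝ)..t, x (s - τ)

/-- The first positive root of a function. -/
noncomputable def firstRoot (x : ℝ → ℝ) : ℝ := sInf {t : ℝ | 0 < t ∧ x t = 0}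

/-- `ψ` is the solution of `ψ'(t) = max{x_τ(ϱ(τ)+t-τ), ψ(t)}` on `[0,τ]`,
`ψ'(t) = ψ(t)` on `[τ,∞)`, `ψ(0) = 0`. -/
def IsPsiSol (τ ρ : ℝ) (xτ ψ : ℝ → ℝ) : Prop :=
  ContinuousOn ψ (Ici (0:ℝ)) ∧ ψ 0 = 0 ∧
    (∀ t ∈ Icc (0:ℝ) τ, ψ t = ∫ s in (0:ℝ)..t, max (xτ (ρ + s - τ)) (ψ s)) ∧
    (∀ t ≥ τ, ψ t = ψ τ + ∫ s in τ..t, ψ s)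

/-- A (continuous, integrated-form) solution of the delay equation
`x'(t) = p(t) x(τ̄(t))` on `[t₀,∞)`. -/
def IsDelaySolution (p τd : ℝ → ℝ) (t₀ : ℝ) (x : ℝ → ℝ) : Prop :=
  Continuous x ∧ ∀ t ≥ t₀, x t = x t₀ + ∫ s in t₀..t, p s * x (τd s)

/-- `x` is `α`-oscillating: eventually every interval on which `x` has no zero
has length at most `α`. -/
def AlphaOscillating (α : ℝ) (x : ℝ → ℝ) : Prop :=
  ∃ T : ℝ, ∀ a b : ℝ, T ≤ a → a < b → (∀ t ∈ Ioo a b, x t ≠ 0) → b - a ≤ α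

/-- `x` is oscillatory: it has arbitrarily large zeros. -/
def Oscillatory (x : ℝ → ℝ) : Prop := ∀ T : ℝ, ∃ t ≥ T, x t = 0


theorem stmt2 (τ : ℝ) (hτ : 1 / Real.exp 1 < τ)
    (xτ : ℝ → ℝ) (hx : IsXSol τ xτ) (ρ : ℝ) (hρ : ρ = firstRoot xτ)
    (σ c : ℝ → ℝ) (hσm : Measurable σ) (hcm : Measurable c)
    (hσ : ∀ t ∈ Icc (0:ℝ) ρ, 0 ≤ σ t ∧ σ t ≤ τ)
    (hc : ∀ t ∈ Icc (0:ℝ) ρ, |c t| ≤ 1)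
    (y : ℝ → ℝ) (hy : ContinuousOn y (Icc (-τ) ρ))
    (hy01 : ∀ t ∈ Icc (-τ) ρ, 0 ≤ y t ∧ y t ≤ 1)
    (hypos : ∃ t ∈ Icc (-τ) ρ, 0 < y t)
    (hyρ : y ρ = 0)
    (hyeq : ∀ t ∈ Icc (0:ℝ) ρ, y t = y 0 - ∫ s in (0:ℝ)..t, c s * y (s - σ s)) :
    (∀ t ∈ Icc (0:ℝ) ρ, 0 ≤ xτ t - y t) ∧
    AntitoneOn (fun t => xτ t - y t) (Icc (0:ℝ) ρ) := by
  obtain ⟨hxc, hxneg, hxeq⟩ := hx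
  have hτ0 : 0 < τ := lt_trans (by positivity) hτ
  have hx0 : xτ 0 = 1 := hxneg 0 le_rfl
  by_cases hZ : {t : ℝ | 0 < t ∧ xτ t = 0}.Nonempty
  case neg =>
    -- degenerate case: no positive root, ρ = sInf ∅ = 0
    have hρ0 : ρ = 0 := by
      rw [hρ, firstRoot, Set.not_nonempty_iff_eq_empty.mp hZ, Real.sInf_empty]
    subst hρ0
    have hy0 : y 0 ≤ 1 := (hy01 0 ⟨by linarith, le_rfl⟩).2
    constructor
    · intro t ht
      have ht0 : t = 0 := le_antisymm ht.2 ht.1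
      subst ht0
      rw [hx0]; linarith
    · intro a ha b hb hab
      have ha0 : a = 0 := le_antisymm ha.2 ha.1
      have hb0 : b = 0 := le_antisymm hb.2 hb.1
      subst ha0; subst hb0; exact le_rfl
  case pos =>
    set Z := {t : ℝ | 0 < t ∧ xτ t = 0} with hZdef
    -- x is eventually nonzero near 0
    obtain ⟨ε, hε, hball⟩ := Metric.eventually_nhds_iff.mp
      ((hxc.tendsto 0).eventually_ne (by rw [hx0]; norm_num : xτ 0 ≠ (0:ℝ)))
    have hZeq : Z = {t : ℝ | xτ t = 0} ∩ Ici ε := by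
      ext t
      constructor
      · rintro ⟨ht0, htx⟩
        refine ⟨htx, ?_⟩
        by_contra hlt
        rw [Set.mem_Ici] at hlt
        push_neg at hlt
        exact hball (by rw [Real.dist_eq, sub_zero, abs_of_pos ht0]; exact hlt) htx
      · rintro ⟨htx, hte⟩
        exact ⟨lt_of_lt_of_le hε hte, htx⟩
    have hZclosed : IsClosed Z := by
      rw [hZeq]
      exact (isClosed_eq hxc continuous_const).inter isClosed_Ici
    have hρZ : ρ ∈ Z := by
      rw [hρ, firstRoot]
      exact hZclosed.csInf_mem hZ ⟨0, fun t ht => ht.1.le⟩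
    have hρpos : 0 < ρ := hρZ.1
    have hxρ : xτ ρ = 0 := hρZ.2
    have hρlb : ∀ t ∈ Z, ρ ≤ t := by
      intro t ht
      rw [hρ, firstRoot]
      exact csInf_le ⟨0, fun s hs => hs.1.le⟩ ht
    -- positivity of x before ρ
    have hxpos : ∀ t, 0 ≤ t → t < ρ → 0 < xτ t := by
      intro t ht0 htρ
      by_contra hle
      push_neg at hle
      rcases eq_or_lt_of_le hle with heq | hlt
      · have htpos : 0 < t := by
          rcases eq_or_lt_of_le ht0 with h | h
          · exfalso; rw [← h, hx0] at heq; norm_num at heq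
          · exact h
        exact absurd (hρlb t ⟨htpos, heq⟩) (not_le.mpr htρ)
      · have : (0:ℝ) ∈ Icc (xτ t) (xτ 0) := ⟨hlt.le, by rw [hx0]; norm_num⟩
        obtain ⟨z, hz, hz0⟩ := intermediate_value_Icc' ht0 hxc.continuousOn this
        have hzpos : 0 < z := by
          rcases eq_or_lt_of_le hz.1 with h | h
          · exfalso; rw [← h, hx0] at hz0; norm_num at hz0
          · exact h
        exact absurd (hρlb z ⟨hzpos, hz0⟩) (not_le.mpr (lt_of_le_of_lt hz.2 htρ))
    have hxnonneg : ∀ u, u ≤ ρ → 0 ≤ xτ u := by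
      intro u hu
      rcases le_or_gt u 0 with h | h
      · rw [hxneg u h]; norm_num
      · rcases eq_or_lt_of_le hu with h2 | h2
        · rw [h2, hxρ]
        · exact (hxpos u h.le h2).le
    -- integrability of the x-integrand
    have hGint : ∀ a b : ℝ, IntervalIntegrable (fun s => xτ (s - τ)) volume a b := by
      intro a b
      exact (hxc.comp (continuous_id.sub continuous_const)).intervalIntegrable a b
    have hG : ∀ u, 0 ≤ u → (∫ s in (0:ℝ)..u, xτ (s - τ)) = 1 - xτ u := by
      intro u hu
      have := hxeq u hu
      linarith
    have hGneg : ∀ u, u ≤ 0 → (∫ s in (0:ℝ)..u, xτ (s - τ)) = u := by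
      intro u hu
      rw [intervalIntegral.integral_congr (g := fun _ => (1:ℝ))
        (by
          intro s hs
          rw [uIcc_of_ge hu] at hs
          exact hxneg (s - τ) (by have := hs.2; linarith))]
      simp
    have hGdiff : ∀ a b : ℝ, (∫ s in a..b, xτ (s - τ))
        = (∫ s in (0:ℝ)..b, xτ (s - τ)) - ∫ s in (0:ℝ)..a, xτ (s - τ) := by
      intro a b
      rw [← intervalIntegral.integral_add_adjacent_intervals (hGint 0 a) (hGint a b)]
      ring
    have hxle1 : ∀ u, u ≤ ρ → xτ u ≤ 1 := by
      intro u hu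
      rcases le_or_gt u 0 with h | h
      · rw [hxneg u h]
      · have hGnn : 0 ≤ ∫ s in (0:ℝ)..u, xτ (s - τ) := by
          apply intervalIntegral.integral_nonneg h.le
          intro s hs
          exact hxnonneg (s - τ) (by have := hs.2; linarith)
        have := hG u h.le
        linarith
    have hmono : ∀ u v : ℝ, u ≤ v → v ≤ ρ → xτ v ≤ xτ u := by
      intro u v huv hv
      rcases le_or_gt v 0 with h | h
      · rw [hxneg v h, hxneg u (le_trans huv h)]
      · rcases le_or_gt u 0 with h2 | h2
        · rw [hxneg u h2]; exact hxle1 v hv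
        · have hnn : 0 ≤ ∫ s in u..v, xτ (s - τ) := by
            apply intervalIntegral.integral_nonneg huv
            intro s hs
            exact hxnonneg (s - τ) (by have := hs.2; linarith)
          have e1 := hG u h2.le
          have e2 := hG v h.le
          have e3 := hGdiff u v
          linarith
    -- the clamped version of y
    set yc : ℝ → ℝ := fun r => y (max (-τ) (min r ρ)) with hycdef
    have hclampmem : ∀ r : ℝ, max (-τ) (min r ρ) ∈ Icc (-τ) ρ := by
      intro r
      exact ⟨le_max_left _ _, max_le (by linarith) (min_le_right _ _)⟩
    have hycont : Continuous yc := by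
      apply hy.comp_continuous
        (continuous_const.max (continuous_id.min continuous_const)) hclampmem
    have hyceq : ∀ r ∈ Icc (-τ) ρ, yc r = y r := by
      intro r hr
      simp only [hycdef]
      rw [min_eq_left hr.2, max_eq_right hr.1]
    have hyc01 : ∀ r : ℝ, 0 ≤ yc r ∧ yc r ≤ 1 := fun r => hy01 _ (hclampmem r)
    -- integrability of the y-integrand on [0, ρ]
    have hfm : Measurable fun s => c s * yc (s - σ s) :=
      hcm.mul (hycont.measurable.comp (measurable_id.sub hσm))
    have hIntOn : IntegrableOn (fun s => c s * yc (s - σ s)) (Icc (0:ℝ) ρ) volume := by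
      apply Integrable.mono' (integrable_const (1:ℝ))
        hfm.aestronglyMeasurable
      rw [ae_restrict_iff' measurableSet_Icc]
      apply ae_of_all
      intro s hs
      have h1 : |c s| ≤ 1 := hc s hs
      have h2 := hyc01 (s - σ s)
      rw [Real.norm_eq_abs, abs_mul]
      have : |yc (s - σ s)| ≤ 1 := abs_le.mpr ⟨by linarith [h2.1], h2.2⟩
      calc |c s| * |yc (s - σ s)| ≤ 1 * 1 :=
        mul_le_mul h1 this (abs_nonneg _) zero_le_one
      _ = 1 := by norm_num
    have hargmem : ∀ s ∈ Icc (0:ℝ) ρ, s - σ s ∈ Icc (-τ) ρ := by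
      intro s hs
      obtain ⟨h1, h2⟩ := hσ s hs
      exact ⟨by linarith [hs.1], by linarith [hs.2]⟩
    have hII : ∀ a b : ℝ, 0 ≤ a → a ≤ ρ → 0 ≤ b → b ≤ ρ →
        IntervalIntegrable (fun s => c s * y (s - σ s)) volume a b := by
      intro a b ha0 haρ hb0 hbρ
      rw [intervalIntegrable_iff]
      have hsub : Set.uIoc a b ⊆ Icc (0:ℝ) ρ := by
        intro s hs
        have hs' : s ∈ uIcc a b := Set.uIoc_subset_uIcc hs
        rw [Set.mem_uIcc] at hs'
        rcases hs' with h | h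
        · exact ⟨by linarith [h.1], by linarith [h.2]⟩
        · exact ⟨by linarith [h.1], by linarith [h.2]⟩
      apply IntegrableOn.congr_fun (hIntOn.mono_set hsub) _ measurableSet_uIoc
      intro s hs
      have hsmem := hsub hs
      simp only
      rw [hyceq _ (hargmem s hsmem)]
    -- backward integral representation of y
    have Ey : ∀ r, 0 ≤ r → r ≤ ρ →
        y r = ∫ s in r..ρ, c s * y (s - σ s) := by
      intro r hr0 hrρ
      have h1 := hyeq r ⟨hr0, hrρ⟩
      have h2 := hyeq ρ ⟨hρpos.le, le_rfl⟩
      have hadd := intervalIntegral.integral_add_adjacent_intervals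
        (hII 0 r le_rfl hρpos.le hr0 hrρ) (hII r ρ hr0 hrρ hρpos.le le_rfl)
      rw [hyρ] at h2
      linarith
    -- the shifted comparison property
    set P : ℝ → Prop := fun u => ∀ r ∈ Icc (-τ) ρ, y r ≤ xτ (r - u) with hPdef
    -- the improvement step
    have step : ∀ u, 0 < u → u ≤ ρ → P u → P (u - min (xτ (ρ - u)) u) := by
      intro u hu0 huρ hPu
      set δ := min (xτ (ρ - u)) u with hδdef
      have hδpos : 0 < δ := lt_min (hxpos (ρ - u) (by linarith) (by linarith)) hu0
      have hδu : δ ≤ u := min_le_right _ _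
      have hδx : δ ≤ xτ (ρ - u) := min_le_left _ _
      intro r hr
      rcases le_or_gt (r - (u - δ)) 0 with hneg | hpos
      · rw [hxneg _ hneg]
        exact (hy01 r hr).2
      · have hr0 : 0 ≤ r := by linarith
        set θ := r - (u - δ) with hθdef
        have hθρ : θ ≤ ρ := by
          have : θ ≤ r := by simp only [hθdef]; linarith
          linarith [hr.2]
        have key : y r ≤ ∫ s in r..ρ, xτ (s - u - τ) := by
          rw [Ey r hr0 hr.2]
          apply intervalIntegral.integral_mono_on hr.2
            (hII r ρ hr0 hr.2 hρpos.le le_rfl)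
            ((hxc.comp ((continuous_id.sub continuous_const).sub
              continuous_const)).intervalIntegrable r ρ)
          intro s hs
          have hsmem : s ∈ Icc (0:ℝ) ρ := ⟨le_trans hr0 hs.1, hs.2⟩
          obtain ⟨hσ1, hσ2⟩ := hσ s hsmem
          have hA0 : 0 ≤ y (s - σ s) := (hy01 _ (hargmem s hsmem)).1
          calc c s * y (s - σ s) ≤ 1 * y (s - σ s) :=
                mul_le_mul_of_nonneg_right
                  (le_trans (le_abs_self _) (hc s hsmem)) hA0
          _ = y (s - σ s) := one_mul _
          _ ≤ xτ (s - σ s - u) := hPu _ (hargmem s hsmem)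
          _ ≤ xτ (s - u - τ) := hmono _ _ (by linarith) (by linarith [hs.2])
        have hcv : (∫ s in r..ρ, xτ (s - u - τ))
            = ∫ s in (r - u)..(ρ - u), xτ (s - τ) := by
          have := intervalIntegral.integral_comp_sub_right
            (a := r) (b := ρ) (fun s => xτ (s - τ)) u
          simpa using this
        have hsplit : (∫ s in (r - u)..(ρ - u), xτ (s - τ))
            = (∫ s in (r - u)..θ, xτ (s - τ)) + ∫ s in θ..(ρ - u), xτ (s - τ) :=
          (intervalIntegral.integral_add_adjacent_intervals
            (hGint (r - u) θ) (hGint θ (ρ - u))).symm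
        have hpart2 : (∫ s in θ..(ρ - u), xτ (s - τ)) = xτ θ - xτ (ρ - u) := by
          rw [hGdiff θ (ρ - u), hG (ρ - u) (by linarith), hG θ hpos.le]
          ring
        have hpart1 : (∫ s in (r - u)..θ, xτ (s - τ)) ≤ δ := by
          have hord : r - u ≤ θ := by simp only [hθdef]; linarith
          calc (∫ s in (r - u)..θ, xτ (s - τ))
              ≤ ∫ _ in (r - u)..θ, (1:ℝ) := by
                apply intervalIntegral.integral_mono_on hord (hGint _ _)
                  (intervalIntegrable_const)
                intro s hs
                exact hxle1 (s - τ) (by have := hs.2; linarith)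
          _ = θ - (r - u) := by simp
          _ = δ := by simp only [hθdef]; ring
        have : y r ≤ δ + (xτ θ - xτ (ρ - u)) := by
          rw [hcv, hsplit, hpart2] at key
          linarith
        have : y r ≤ xτ θ := by linarith
        simpa only [hθdef] using this
    -- the set of valid shifts
    set S : Set ℝ := {u : ℝ | u ∈ Icc (0:ℝ) ρ ∧ P u} with hSdef
    have hSclosed : IsClosed S := by
      have : S = Icc (0:ℝ) ρ ∩ ⋂ r ∈ Icc (-τ) ρ, {u : ℝ | y r ≤ xτ (r - u)} := by
        ext u
        simp only [hSdef, Set.mem_setOf_eq, Set.mem_inter_iff, Set.mem_iInter, hPdef]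
      rw [this]
      exact isClosed_Icc.inter (isClosed_biInter fun r hr =>
        isClosed_le (continuous_const) (hxc.comp (continuous_sub_left r)))
    have hSne : S.Nonempty := by
      refine ⟨ρ, ⟨hρpos.le, le_rfl⟩, ?_⟩
      intro r hr
      rw [hxneg (r - ρ) (by linarith [hr.2])]
      exact (hy01 r hr).2
    have hSbdd : BddBelow S := ⟨0, fun u hu => hu.1.1⟩
    have hmem := hSclosed.csInf_mem hSne hSbdd
    set m := sInf S with hmdef
    have hm0 : m = 0 := by
      by_contra hne
      have hmpos : 0 < m := lt_of_le_of_ne hmem.1.1 (Ne.symm hne)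
      have hstep := step m hmpos hmem.1.2 hmem.2
      set δ := min (xτ (ρ - m)) m with hδdef
      have hδpos : 0 < δ := lt_min (hxpos (ρ - m) (by linarith [hmem.1.2])
        (by linarith)) hmpos
      have hδm : δ ≤ m := min_le_right _ _
      have hmem' : m - δ ∈ S := ⟨⟨by linarith, by linarith [hmem.1.2]⟩, hstep⟩
      have := csInf_le hSbdd hmem'
      linarith
    have hP0 : P 0 := by
      have := hmem.2
      rwa [hm0] at this
    have hyx : ∀ t ∈ Icc (-τ) ρ, y t ≤ xτ t := by
      intro t ht
      have := hP0 t ht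
      rwa [sub_zero] at this
    constructor
    · intro t ht
      have : y t ≤ xτ t := hyx t ⟨by linarith [ht.1], ht.2⟩
      linarith
    · intro t₁ h₁ t₂ h₂ h₁₂
      simp only
      -- x t₁ - x t₂ = ∫_{t₁}^{t₂} xτ (s - τ)
      have ex : xτ t₁ - xτ t₂ = ∫ s in t₁..t₂, xτ (s - τ) := by
        rw [hGdiff t₁ t₂, hG t₁ h₁.1, hG t₂ h₂.1]
        ring
      have ey : y t₁ - y t₂ = ∫ s in t₁..t₂, c s * y (s - σ s) := by
        have e1 := hyeq t₁ h₁
        have e2 := hyeq t₂ h₂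
        have hadd := intervalIntegral.integral_add_adjacent_intervals
          (hII 0 t₁ le_rfl hρpos.le h₁.1 h₁.2) (hII t₁ t₂ h₁.1 h₁.2 h₂.1 h₂.2)
        linarith
      have hle : (∫ s in t₁..t₂, c s * y (s - σ s)) ≤ ∫ s in t₁..t₂, xτ (s - τ) := by
        apply intervalIntegral.integral_mono_on h₁₂
          (hII t₁ t₂ h₁.1 h₁.2 h₂.1 h₂.2) (hGint t₁ t₂)
        intro s hs
        have hsmem : s ∈ Icc (0:ℝ) ρ := ⟨le_trans h₁.1 hs.1, le_trans hs.2 h₂.2⟩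
        obtain ⟨hσ1, hσ2⟩ := hσ s hsmem
        have hA0 : 0 ≤ y (s - σ s) := (hy01 _ (hargmem s hsmem)).1
        calc c s * y (s - σ s) ≤ 1 * y (s - σ s) :=
              mul_le_mul_of_nonneg_right
                (le_trans (le_abs_self _) (hc s hsmem)) hA0
        _ = y (s - σ s) := one_mul _
        _ ≤ xτ (s - σ s) := hyx _ (hargmem s hsmem)
        _ ≤ xτ (s - τ) := hmono _ _ (by linarith) (by linarith [hsmem.2])
      linarith
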